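/- Let f_0 be a density on ℝ and suppose there is a constant C_5 > 0 and σ_0 > 0 such that (φ_{σ/√2} * f_0)(y) ≥ C_5' f_0(y) for all y and all σ < σ_0 (where C_5' > 0). Then for any μ ∈ C[0,1] and σ < σ_0, with μ_0 the quantile function of f_0, the density f_{μ,σ}(y) = ∫_0^1 φ_σ(y - μ(x)) dx satisfies f_{μ,σ}(y) ≥ C f_0(y) · exp( - ‖μ - μ_0‖_∞² / σ² ) for some constant C > 0 depending only on C_5', and consequently log ‖f_0 / f_{μ,σ}‖_∞ ≤ C_6 + ‖μ - μ_0‖_∞² / σ² for a constant C_6. -/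

import Mathlib

open MeasureTheory Real Set

/-- The Gaussian density with mean 0 and standard deviation `σ`. -/
noncomputable def phi (σ u : ℝ) : ℝ :=
  (Real.sqrt (2 * Real.pi * σ ^ 2))⁻¹ * Real.exp (-u ^ 2 / (2 * σ ^ 2))

/-- `f_{μ,σ}(y) = ∫_0^1 φ_σ(y - μ x) dx`. -/
noncomputable def fdens (μ : ℝ → ℝ) (σ y : ℝ) : ℝ :=
  ∫ x in Set.Icc (0:ℝ) 1, phi σ (y - μ x)

lemma phi_nonneg (σ u : ℝ) : 0 ≤ phi σ u := by
  unfold phi; positivity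

lemma phi_continuous (σ : ℝ) : Continuous (phi σ) := by
  unfold phi; fun_prop

/-- Key pointwise bound: if `|u - v| ≤ M` then
`(√2)⁻¹ exp(-M²/σ²) φ_{σ/√2}(v) ≤ φ_σ(u)`. -/
lemma phi_key (σ M u v : ℝ) (hσ : 0 < σ) (huv : |u - v| ≤ M) :
    (Real.sqrt 2)⁻¹ * Real.exp (-M ^ 2 / σ ^ 2) * phi (σ / Real.sqrt 2) v
      ≤ phi σ u := by
  have hs2 : (0:ℝ) < Real.sqrt 2 := Real.sqrt_pos.mpr (by norm_num)
  have hs2sq : (Real.sqrt 2) ^ 2 = 2 := Real.sq_sqrt (by norm_num)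
  have hσσ : (σ / Real.sqrt 2) ^ 2 = σ ^ 2 / 2 := by
    rw [div_pow, hs2sq]
  have hpi := Real.pi_pos
  unfold phi
  rw [hσσ]
  have harg : 2 * Real.pi * (σ ^ 2 / 2) = Real.pi * σ ^ 2 := by ring
  rw [harg]
  have hA : Real.sqrt (2 * Real.pi * σ ^ 2) = Real.sqrt 2 * Real.sqrt (Real.pi * σ ^ 2) := by
    rw [mul_assoc, Real.sqrt_mul (by norm_num)]
  have hB : (0:ℝ) < Real.sqrt (Real.pi * σ ^ 2) := Real.sqrt_pos.mpr (by positivity)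
  -- exponent inequality
  have hM0 : 0 ≤ M := le_trans (abs_nonneg _) huv
  have h1 : (u - v) ^ 2 ≤ M ^ 2 := by
    have := abs_le.mp huv
    nlinarith [this.1, this.2]
  have hexp : Real.exp (-M ^ 2 / σ ^ 2) * Real.exp (-v ^ 2 / (2 * (σ ^ 2 / 2)))
      ≤ Real.exp (-u ^ 2 / (2 * σ ^ 2)) := by
    rw [← Real.exp_add]
    apply Real.exp_le_exp.mpr
    have h2 : 2 * (σ ^ 2 / 2) = σ ^ 2 := by ring
    rw [h2]
    rw [← add_div, div_le_div_iff₀ (by positivity) (by positivity)]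
    nlinarith [sq_nonneg (u - 2 * v), sq_nonneg σ]
  calc (Real.sqrt 2)⁻¹ * Real.exp (-M ^ 2 / σ ^ 2) *
        ((Real.sqrt (Real.pi * σ ^ 2))⁻¹ * Real.exp (-v ^ 2 / (2 * (σ ^ 2 / 2))))
      = (Real.sqrt 2 * Real.sqrt (Real.pi * σ ^ 2))⁻¹ *
        (Real.exp (-M ^ 2 / σ ^ 2) * Real.exp (-v ^ 2 / (2 * (σ ^ 2 / 2)))) := by
        rw [mul_inv]; ring
    _ ≤ (Real.sqrt 2 * Real.sqrt (Real.pi * σ ^ 2))⁻¹ * Real.exp (-u ^ 2 / (2 * σ ^ 2)) := by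
        apply mul_le_mul_of_nonneg_left hexp (by positivity)
    _ = (Real.sqrt (2 * Real.pi * σ ^ 2))⁻¹ * Real.exp (-u ^ 2 / (2 * σ ^ 2)) := by
        rw [hA]

/-- Lower bound on `f_{μ,σ}` in terms of the true density `f₀`, and the resulting
bound `log ‖f₀/f_{μ,σ}‖_∞ ≤ C₆ + ‖μ - μ₀‖_∞²/σ²` (stated multiplicatively).
Here `μ₀` is the (bounded) quantile function of `f₀`, encoded via the
convolution identity, and `M` is any sup-norm bound on `μ - μ₀` over `[0,1]`. -/
theorem fdens_lower_bound
    (f0 μ0 : ℝ → ℝ) (hf0 : ∀ t, 0 ≤ f0 t) (hint1 : ∫ t, f0 t = 1)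
    (hquant : ∀ (y s : ℝ), 0 < s →
      (∫ x in Set.Icc (0:ℝ) 1, phi s (y - μ0 x)) = ∫ t, phi s (y - t) * f0 t)
    (C5' σ0 : ℝ) (hC5' : 0 < C5') (hσ0 : 0 < σ0)
    (hconv : ∀ y σ, 0 < σ → σ < σ0 →
      C5' * f0 y ≤ ∫ t, phi (σ / Real.sqrt 2) (y - t) * f0 t) :
    ∃ C > 0, ∃ C6 : ℝ,
      ∀ (μ : ℝ → ℝ), ContinuousOn μ (Set.Icc 0 1) →
      ∀ σ, 0 < σ → σ < σ0 →
      ∀ M : ℝ, (∀ x ∈ Set.Icc (0:ℝ) 1, |μ x - μ0 x| ≤ M) →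
      (∀ y, C * f0 y * Real.exp (-M ^ 2 / σ ^ 2) ≤ fdens μ σ y) ∧
      (∀ y, f0 y ≤ Real.exp (C6 + M ^ 2 / σ ^ 2) * fdens μ σ y) := by
  have hs2 : (0:ℝ) < Real.sqrt 2 := Real.sqrt_pos.mpr (by norm_num)
  set c := C5' / Real.sqrt 2 with hc
  have hcpos : 0 < c := div_pos hC5' hs2
  refine ⟨c, hcpos, -Real.log c, ?_⟩
  intro μ hμ σ hσ hσσ0 M hM
  have hs : 0 < σ / Real.sqrt 2 := div_pos hσ hs2
  have main : ∀ y, c * f0 y * Real.exp (-M ^ 2 / σ ^ 2) ≤ fdens μ σ y := by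
    intro y
    have hconv' := hconv y σ hσ hσσ0
    have hq := hquant y (σ / Real.sqrt 2) hs
    have hInt : IntegrableOn (fun x => phi σ (y - μ x)) (Set.Icc (0:ℝ) 1) := by
      apply ContinuousOn.integrableOn_Icc
      exact (phi_continuous σ).comp_continuousOn (continuousOn_const.sub hμ)
    have hmono : ∫ x in Set.Icc (0:ℝ) 1,
        (Real.sqrt 2)⁻¹ * Real.exp (-M ^ 2 / σ ^ 2) * phi (σ / Real.sqrt 2) (y - μ0 x)
        ≤ fdens μ σ y := by
      unfold fdens
      apply integral_mono_of_nonneg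
      · filter_upwards with x
        have := phi_nonneg (σ / Real.sqrt 2) (y - μ0 x)
        positivity
      · exact hInt
      · filter_upwards [ae_restrict_mem measurableSet_Icc] with x hx
        have habs : |(y - μ x) - (y - μ0 x)| ≤ M := by
          have : (y - μ x) - (y - μ0 x) = -(μ x - μ0 x) := by ring
          rw [this, abs_neg]; exact hM x hx
        exact phi_key σ M (y - μ x) (y - μ0 x) hσ habs
    calc c * f0 y * Real.exp (-M ^ 2 / σ ^ 2)
        = (Real.sqrt 2)⁻¹ * Real.exp (-M ^ 2 / σ ^ 2) * (C5' * f0 y) := by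
          rw [hc]; field_simp
      _ ≤ (Real.sqrt 2)⁻¹ * Real.exp (-M ^ 2 / σ ^ 2) *
            (∫ t, phi (σ / Real.sqrt 2) (y - t) * f0 t) := by
          apply mul_le_mul_of_nonneg_left hconv' (by positivity)
      _ = (Real.sqrt 2)⁻¹ * Real.exp (-M ^ 2 / σ ^ 2) *
            (∫ x in Set.Icc (0:ℝ) 1, phi (σ / Real.sqrt 2) (y - μ0 x)) := by rw [hq]
      _ = ∫ x in Set.Icc (0:ℝ) 1,
            (Real.sqrt 2)⁻¹ * Real.exp (-M ^ 2 / σ ^ 2) * phi (σ / Real.sqrt 2) (y - μ0 x) := by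
          rw [integral_const_mul]
      _ ≤ fdens μ σ y := hmono
  refine ⟨main, fun y => ?_⟩
  have h := main y
  have e1 : Real.exp (-M ^ 2 / σ ^ 2) * Real.exp (M ^ 2 / σ ^ 2) = 1 := by
    rw [← Real.exp_add, neg_div, neg_add_cancel, Real.exp_zero]
  have h2 : c * f0 y ≤ fdens μ σ y * Real.exp (M ^ 2 / σ ^ 2) := by
    have := mul_le_mul_of_nonneg_right h (le_of_lt (Real.exp_pos (M ^ 2 / σ ^ 2)))
    rwa [mul_assoc, e1, mul_one] at this
  have hexpC : Real.exp (-Real.log c + M ^ 2 / σ ^ 2)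
      = c⁻¹ * Real.exp (M ^ 2 / σ ^ 2) := by
    rw [Real.exp_add, Real.exp_neg, Real.exp_log hcpos]
  calc f0 y = c⁻¹ * (c * f0 y) := by field_simp
    _ ≤ c⁻¹ * (fdens μ σ y * Real.exp (M ^ 2 / σ ^ 2)) := by
        apply mul_le_mul_of_nonneg_left h2 (by positivity)
    _ = Real.exp (-Real.log c + M ^ 2 / σ ^ 2) * fdens μ σ y := by
        rw [hexpC]; ring
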